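/- The Peregrine solution ψ₁(x,t) = (1 − 4(1 + it)/(x² + t² + 1))·exp(it/2), regarded as a function ℝ² → ℂ, satisfies the focusing nonlinear Schrödinger equation i·ψ_t + ψ_xx + (1/2)|ψ|²·ψ = 0 for all (x,t) ∈ ℝ². -/

import Mathlib

open Complex

/-- Partial derivative in the first (space) variable, for complex-valued functions. -/
noncomputable def dXC (f : ℝ → ℝ → ℂ) : ℝ → ℝ → ℂ := fun x t => deriv (fun x' => f x' t) x

/-- Partial derivative in the second (time) variable, for complex-valued functions. -/
noncomputable def dTC (f : ℝ → ℝ → ℂ) : ℝ → ℝ → ℂ := fun x t => deriv (fun t' => f x t') t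

/-- The focusing nonlinear Schrödinger equation `i ψ_t + ψ_xx + (1/2)|ψ|² ψ = 0`. -/
def IsFocusingNLSSolution (ψ : ℝ → ℝ → ℂ) : Prop :=
  ∀ x t : ℝ,
    Complex.I * dTC ψ x t + dXC (dXC ψ) x t
      + (1 / 2) * (((‖ψ x t‖ : ℝ) : ℂ)) ^ 2 * ψ x t = 0

private lemma hDne (x t : ℝ) : ((x:ℂ)^2 + (t:ℂ)^2 + 1) ≠ 0 := by
  have h : ((x:ℂ)^2 + (t:ℂ)^2 + 1) = ((x^2 + t^2 + 1 : ℝ) : ℂ) := by push_cast; ring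
  rw [h, Ne, Complex.ofReal_eq_zero]
  positivity

private lemma hasDerivAt_den (s : ℂ) (x : ℝ) :
    HasDerivAt (fun x' : ℝ => ((x':ℂ)^2 + s^2 + 1)) (2*(x:ℂ)) x := by
  have h : HasDerivAt (fun x' : ℝ => ((x':ℂ))) 1 x := Complex.ofRealCLM.hasDerivAt
  have h2 := ((h.mul h).add_const (s^2 + 1))
  have e : (fun x' : ℝ => ((x':ℂ)^2 + s^2 + 1))
      = fun y : ℝ => ((fun x' : ℝ => (x':ℂ)) * fun x' : ℝ => (x':ℂ)) y + (s^2 + 1) := by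
    funext y; simp only [Pi.mul_apply]; ring
  rw [e]; exact h2.congr_deriv (by ring)

/-- first x-derivative, nice closed form -/
private lemma psi_x (t x : ℝ) :
    HasDerivAt (fun x' : ℝ => (1 - 4 * (1 + Complex.I * (t : ℂ)) / ((x' : ℂ) ^ 2 + (t : ℂ) ^ 2 + 1))
        * Complex.exp (Complex.I * (t : ℂ) / 2))
      (8*(x:ℂ)*(1 + Complex.I*(t:ℂ))
          / (((x:ℂ)^2 + (t:ℂ)^2 + 1) * ((x:ℂ)^2 + (t:ℂ)^2 + 1))
        * Complex.exp (Complex.I * (t : ℂ) / 2)) x := by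
  have hD := hDne x t
  have h1 := (hasDerivAt_const x (4 * (1 + Complex.I * (t:ℂ)))).div (hasDerivAt_den ((t:ℂ)) x) hD
  have h2 := (h1.const_sub 1).mul_const (Complex.exp (Complex.I * (t : ℂ) / 2))
  exact h2.congr_deriv (by ring)

/-- second x-derivative -/
private lemma psi_xx (t x : ℝ) :
    HasDerivAt (fun x' : ℝ => 8*(x':ℂ)*(1 + Complex.I*(t:ℂ))
          / (((x':ℂ)^2 + (t:ℂ)^2 + 1) * ((x':ℂ)^2 + (t:ℂ)^2 + 1))
        * Complex.exp (Complex.I * (t : ℂ) / 2))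
      ((8*(1 + Complex.I*(t:ℂ)) * (((x:ℂ)^2 + (t:ℂ)^2 + 1) * ((x:ℂ)^2 + (t:ℂ)^2 + 1))
          - 8*(x:ℂ)*(1 + Complex.I*(t:ℂ)) * (2*(x:ℂ) * ((x:ℂ)^2 + (t:ℂ)^2 + 1)
              + ((x:ℂ)^2 + (t:ℂ)^2 + 1) * (2*(x:ℂ))))
          / (((x:ℂ)^2 + (t:ℂ)^2 + 1) * ((x:ℂ)^2 + (t:ℂ)^2 + 1))^2
        * Complex.exp (Complex.I * (t : ℂ) / 2)) x := by
  have hD := hDne x t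
  have hr : HasDerivAt (fun x' : ℝ => ((x':ℂ))) 1 x := Complex.ofRealCLM.hasDerivAt
  have hnum : HasDerivAt (fun x' : ℝ => 8*(x':ℂ)*(1 + Complex.I*(t:ℂ)))
      (8 * 1 * (1 + Complex.I*(t:ℂ))) x := (hr.const_mul 8).mul_const _
  have hden := (hasDerivAt_den ((t:ℂ)) x).mul (hasDerivAt_den ((t:ℂ)) x)
  have h := (hnum.div hden (mul_ne_zero hD hD)).mul_const (Complex.exp (Complex.I * (t : ℂ) / 2))
  exact h.congr_deriv (by simp only [Pi.mul_apply, Pi.div_apply]; ring)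

/-- t-derivative -/
private lemma psi_t (x t : ℝ) :
    HasDerivAt (fun t' : ℝ => (1 - 4 * (1 + Complex.I * (t' : ℂ)) / ((x : ℂ) ^ 2 + (t' : ℂ) ^ 2 + 1))
        * Complex.exp (Complex.I * (t' : ℂ) / 2))
      ((0 - (4*Complex.I*((x:ℂ)^2 + (t:ℂ)^2 + 1) - 4*(1 + Complex.I*(t:ℂ))*(2*(t:ℂ)))
            / ((x:ℂ)^2 + (t:ℂ)^2 + 1)^2)
          * Complex.exp (Complex.I * (t : ℂ) / 2)
        + (1 - 4 * (1 + Complex.I * (t : ℂ)) / ((x : ℂ) ^ 2 + (t : ℂ) ^ 2 + 1))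
          * (Complex.exp (Complex.I * (t : ℂ) / 2) * (Complex.I / 2))) t := by
  have hD := hDne x t
  have hr : HasDerivAt (fun t' : ℝ => ((t':ℂ))) 1 t := Complex.ofRealCLM.hasDerivAt
  have hnum : HasDerivAt (fun t' : ℝ => 4 * (1 + Complex.I * (t':ℂ)))
      (4 * (Complex.I * 1)) t := ((hr.const_mul Complex.I).const_add 1).const_mul 4
  have hden : HasDerivAt (fun t' : ℝ => ((x:ℂ)^2 + (t':ℂ)^2 + 1)) (2*(t:ℂ)) t := by
    have h2 := ((hr.mul hr).const_add ((x:ℂ)^2)).add_const 1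
    have e : (fun t' : ℝ => ((x:ℂ)^2 + (t':ℂ)^2 + 1))
        = fun y : ℝ => (x:ℂ)^2 + ((fun t' : ℝ => (t':ℂ)) * fun t' : ℝ => (t':ℂ)) y + 1 := by
      funext y; simp only [Pi.mul_apply]; ring
    rw [e]; exact h2.congr_deriv (by ring)
  have he : HasDerivAt (fun t' : ℝ => Complex.exp (Complex.I * (t' : ℂ) / 2))
      (Complex.exp (Complex.I * (t : ℂ) / 2) * (Complex.I / 2)) t := by
    have hi : HasDerivAt (fun t' : ℝ => Complex.I * (t':ℂ) / 2) (Complex.I * 1 / 2) t :=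
      (hr.const_mul Complex.I).div_const 2
    have := hi.cexp
    convert this using 1
    ring
  have h := ((hnum.div hden hD).const_sub 1).mul he
  exact h.congr_deriv (by simp only [Pi.mul_apply, Pi.div_apply]; ring)

set_option maxHeartbeats 2000000 in
theorem peregrine_solves_NLS :
    IsFocusingNLSSolution
      (fun x t => (1 - 4 * (1 + Complex.I * (t : ℂ)) / ((x : ℂ) ^ 2 + (t : ℂ) ^ 2 + 1))
        * Complex.exp (Complex.I * (t : ℂ) / 2)) := by
  intro x t
  have hD := hDne x t
  have hE : Complex.exp (Complex.I * (t : ℂ) / 2) ≠ 0 := Complex.exp_ne_zero _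
  simp only [dTC, dXC]
  -- rewrite inner x-derivative
  have hx1 : (fun x' : ℝ => deriv (fun x'' : ℝ =>
      (1 - 4 * (1 + Complex.I * (t : ℂ)) / ((x'' : ℂ) ^ 2 + (t : ℂ) ^ 2 + 1))
        * Complex.exp (Complex.I * (t : ℂ) / 2)) x')
      = fun x' : ℝ => 8*(x':ℂ)*(1 + Complex.I*(t:ℂ))
          / (((x':ℂ)^2 + (t:ℂ)^2 + 1) * ((x':ℂ)^2 + (t:ℂ)^2 + 1))
        * Complex.exp (Complex.I * (t : ℂ) / 2) := by
    funext x'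
    exact (psi_x t x').deriv
  rw [hx1, (psi_xx t x).deriv, (psi_t x t).deriv]
  -- handle the modulus: |e|=1 so the modulus squared is e-free
  have habs : (((‖(1 - 4 * (1 + Complex.I * (t : ℂ)) / ((x : ℂ) ^ 2 + (t : ℂ) ^ 2 + 1))
        * Complex.exp (Complex.I * (t : ℂ) / 2)‖ : ℝ) : ℂ)) ^ 2
      = (1 - 4 * (1 + Complex.I * (t : ℂ)) / ((x : ℂ) ^ 2 + (t : ℂ) ^ 2 + 1))
        * (1 - 4 * (1 - Complex.I * (t : ℂ)) / ((x : ℂ) ^ 2 + (t : ℂ) ^ 2 + 1)) := by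
    rw [← Complex.ofReal_pow, Complex.sq_norm, ← Complex.mul_conj]
    rw [map_mul, ← Complex.exp_conj]
    simp only [map_one, map_mul, map_add, map_sub, map_div₀, map_ofNat, map_pow,
      Complex.conj_ofReal, Complex.conj_I]
    rw [show (-Complex.I * (t:ℂ) / 2) = -(Complex.I * (t:ℂ) / 2) by ring, Complex.exp_neg]
    field_simp
    ring
  rw [habs]
  have h2 : Complex.I ^ 2 = -1 := Complex.I_sq
  have h3 : Complex.I ^ 3 = -Complex.I := by simp [pow_succ, Complex.I_mul_I]
  have h4 : Complex.I ^ 4 = 1 := by simp [pow_succ, Complex.I_mul_I]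
  have h5 : Complex.I ^ 5 = Complex.I := by simp [pow_succ, Complex.I_mul_I]
  have h6 : Complex.I ^ 6 = -1 := by simp [pow_succ, Complex.I_mul_I]
  field_simp
  ring_nf
  simp only [h2, h3, h4, h5, h6]
  ring
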